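/- Let n ≥ 0 and let 0 = t₀ < t₁ < ⋯ < t_{2n+1} be real numbers. Define μ(t) = 8 · Σ_{k=0}^∞ (e^{−(2k+1)²π² t}/((2k+1)²π²)) · Σ_{j=0}^{2n+1} (−1)^{j+1} e^{(2k+1)²π² t_j} for t ≥ t_{2n+1}. Then μ is strictly monotone decreasing on [t_{2n+1}, ∞), μ(t) → 0 as t → ∞, and consequently for every m with 0 < m < μ(t_{2n+1}) there exists a unique t_{2n+2} > t_{2n+1} with μ(t_{2n+2}) = m. -/

import Mathlib

lemma muOff_pairSum (f : ℕ → ℝ) (n : ℕ) :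
    ∑ j ∈ Finset.range (2 * n + 2), (-1 : ℝ) ^ (j + 1) * f j =
      ∑ i ∈ Finset.range (n + 1), (f (2 * i + 1) - f (2 * i)) := by
  induction n with
  | zero => simp [Finset.sum_range_succ]; ring
  | succ n ih =>
    have h : 2 * (n + 1) + 2 = (2 * n + 2) + 1 + 1 := by ring
    rw [h, Finset.sum_range_succ, Finset.sum_range_succ, ih,
      Finset.sum_range_succ _ (n + 1)]
    have h1 : ((-1 : ℝ)) ^ (2 * n + 2 + 1) = -1 := Odd.neg_one_pow ⟨n + 1, by ring⟩
    have h2 : ((-1 : ℝ)) ^ (2 * n + 2 + 1 + 1) = 1 := Even.neg_one_pow ⟨n + 2, by ring⟩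
    rw [h1, h2, show 2 * (n + 1) + 1 = 2 * n + 2 + 1 from by ring,
      show 2 * (n + 1) = 2 * n + 2 from by ring]
    ring

/-- The total mass for `t ≥ t_{2n+1}` (boundary value switched off at `t_{2n+1}`):
`μ(t) = 8 ∑_{k=0}^∞ (e^{-(2k+1)²π² t}/((2k+1)²π²)) ∑_{j=0}^{2n+1} (-1)^{j+1} e^{(2k+1)²π² t_j}`. -/
noncomputable def muOff (n : ℕ) (t : ℕ → ℝ) (s : ℝ) : ℝ :=
  8 * ∑' k : ℕ, (Real.exp (-((2 * (k : ℝ) + 1) ^ 2 * Real.pi ^ 2) * s) /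
      ((2 * (k : ℝ) + 1) ^ 2 * Real.pi ^ 2)) *
    ∑ j ∈ Finset.range (2 * n + 2), (-1 : ℝ) ^ (j + 1) *
      Real.exp (((2 * (k : ℝ) + 1) ^ 2 * Real.pi ^ 2) * t j)

/-- For switching times `0 = t₀ < t₁ < ⋯ < t_{2n+1}` the mass `μ` is strictly decreasing on
`[t_{2n+1}, ∞)`, tends to `0` at infinity, and hence hits every level `m` with
`0 < m < μ(t_{2n+1})` at a unique time `t_{2n+2} > t_{2n+1}`. -/
theorem muOff_strictAnti_tendsto_existsUnique (n : ℕ)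
    (t : ℕ → ℝ) (ht0 : t 0 = 0) (hmono : ∀ i, i < 2 * n + 1 → t i < t (i + 1)) :
    StrictAntiOn (muOff n t) (Set.Ici (t (2 * n + 1))) ∧
    Filter.Tendsto (muOff n t) Filter.atTop (nhds 0) ∧
    ∀ m : ℝ, 0 < m → m < muOff n t (t (2 * n + 1)) →
      ∃! s : ℝ, t (2 * n + 1) < s ∧ muOff n t s = m := by
  set T := t (2 * n + 1) with hT
  set lam : ℕ → ℝ := fun k => (2 * (k : ℝ) + 1) ^ 2 * Real.pi ^ 2 with hlam
  have hpi := Real.pi_pos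
  have hlampos : ∀ k, 0 < lam k := by
    intro k
    have : (0:ℝ) < 2 * (k:ℝ) + 1 := by positivity
    positivity
  have hlam0le : ∀ k, lam 0 ≤ lam k := by
    intro k
    have hk : (0:ℝ) ≤ (k:ℝ) := Nat.cast_nonneg k
    simp only [hlam]
    push_cast
    nlinarith [sq_nonneg Real.pi, mul_nonneg hk hk]
  -- all switching times are ≤ T
  have htle : ∀ j, j ≤ 2 * n + 1 → t j ≤ T := by
    have key : ∀ d j, j + d = 2 * n + 1 → t j ≤ T := by
      intro d
      induction d with
      | zero => intro j hj; simp at hj; subst hj; exact le_refl _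
      | succ d ih =>
        intro j hj
        have h1 : t j < t (j + 1) := hmono j (by omega)
        have h2 : t (j + 1) ≤ T := ih (j + 1) (by omega)
        linarith
    intro j hj
    exact key (2 * n + 1 - j) j (by omega)
  set a : ℕ → ℝ := fun k => ∑ j ∈ Finset.range (2 * n + 2), (-1 : ℝ) ^ (j + 1) *
      Real.exp (lam k * t j) with ha
  have hapair : ∀ k, a k = ∑ i ∈ Finset.range (n + 1),
      (Real.exp (lam k * t (2 * i + 1)) - Real.exp (lam k * t (2 * i))) := by
    intro k; exact muOff_pairSum (fun j => Real.exp (lam k * t j)) n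
  have hapos : ∀ k, 0 < a k := by
    intro k
    rw [hapair k]
    apply Finset.sum_pos _ ⟨0, Finset.mem_range.2 (Nat.succ_pos n)⟩
    intro i hi
    have hi' : 2 * i < 2 * n + 1 := by
      have := Finset.mem_range.1 hi; omega
    have : t (2 * i) < t (2 * i + 1) := hmono _ hi'
    have : lam k * t (2 * i) < lam k * t (2 * i + 1) :=
      mul_lt_mul_of_pos_left this (hlampos k)
    simpa using Real.exp_lt_exp.2 this
  have haupper : ∀ k, a k ≤ ((n : ℝ) + 1) * Real.exp (lam k * T) := by
    intro k
    rw [hapair k]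
    calc ∑ i ∈ Finset.range (n + 1),
        (Real.exp (lam k * t (2 * i + 1)) - Real.exp (lam k * t (2 * i)))
        ≤ ∑ i ∈ Finset.range (n + 1), Real.exp (lam k * T) := by
          apply Finset.sum_le_sum
          intro i hi
          have hi' : 2 * i + 1 ≤ 2 * n + 1 := by
            have := Finset.mem_range.1 hi; omega
          have h1 : t (2 * i + 1) ≤ T := htle _ hi'
          have h2 : Real.exp (lam k * t (2 * i + 1)) ≤ Real.exp (lam k * T) :=
            Real.exp_le_exp.2 (mul_le_mul_of_nonneg_left h1 (hlampos k).le)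
          have h3 : 0 < Real.exp (lam k * t (2 * i)) := Real.exp_pos _
          linarith
      _ = ((n : ℝ) + 1) * Real.exp (lam k * T) := by
          rw [Finset.sum_const, Finset.card_range]; push_cast; ring
  set f : ℕ → ℝ → ℝ := fun k s => Real.exp (-(lam k) * s) / lam k * a k with hf
  have hmu : ∀ s, muOff n t s = 8 * ∑' k, f k s := fun s => rfl
  have hfnonneg : ∀ k s, 0 ≤ f k s := by
    intro k s
    have := (hapos k).le
    have := (hlampos k).le
    have := (Real.exp_pos (-(lam k) * s)).le
    positivity
  have hu : Summable (fun k : ℕ => ((n : ℝ) + 1) / lam k) := by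
    have h1 : Summable (fun k : ℕ => 1 / ((k : ℝ) + 1) ^ 2) := by
      have h0 : Summable (fun k : ℕ => 1 / (k : ℝ) ^ 2) :=
        (Real.summable_one_div_nat_pow (p := 2)).2 (by norm_num)
      have h2 := (summable_nat_add_iff 1).2 h0
      apply h2.congr
      intro k
      push_cast
      ring
    have h2 : Summable (fun k : ℕ => 1 / (2 * (k : ℝ) + 1) ^ 2) := by
      apply Summable.of_nonneg_of_le (fun k => by positivity) _ h1
      intro k
      have hk : (0:ℝ) ≤ (k : ℝ) := Nat.cast_nonneg k
      apply one_div_le_one_div_of_le (by positivity)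
      nlinarith
    apply (h2.mul_left (((n : ℝ) + 1) / Real.pi ^ 2)).congr
    intro k
    simp only [hlam]
    rw [div_mul_div_comm, mul_one, mul_comm (Real.pi ^ 2)]
  have hfle : ∀ s, T ≤ s → ∀ k,
      f k s ≤ Real.exp (-(lam 0) * (s - T)) * (((n : ℝ) + 1) / lam k) := by
    intro s hs k
    have h1 : f k s ≤ Real.exp (-(lam k) * s) / lam k * (((n : ℝ) + 1) * Real.exp (lam k * T)) := by
      apply mul_le_mul_of_nonneg_left (haupper k) (by positivity)
    have h2 : Real.exp (-(lam k) * s) / lam k * (((n : ℝ) + 1) * Real.exp (lam k * T))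
        = Real.exp (-(lam k) * (s - T)) * (((n : ℝ) + 1) / lam k) := by
      rw [show -(lam k) * (s - T) = -(lam k) * s + lam k * T from by ring, Real.exp_add]
      ring
    have h3 : Real.exp (-(lam k) * (s - T)) ≤ Real.exp (-(lam 0) * (s - T)) := by
      apply Real.exp_le_exp.2
      have := hlam0le k
      nlinarith [sub_nonneg.2 hs]
    calc f k s ≤ Real.exp (-(lam k) * (s - T)) * (((n : ℝ) + 1) / lam k) := by rw [← h2]; exact h1
      _ ≤ Real.exp (-(lam 0) * (s - T)) * (((n : ℝ) + 1) / lam k) := by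
          apply mul_le_mul_of_nonneg_right h3 (by positivity)
  have hfle' : ∀ s, T ≤ s → ∀ k, f k s ≤ ((n : ℝ) + 1) / lam k := by
    intro s hs k
    have h1 := hfle s hs k
    have h2 : Real.exp (-(lam 0) * (s - T)) ≤ 1 := by
      rw [Real.exp_le_one_iff]
      have := hlampos 0
      nlinarith [sub_nonneg.2 hs]
    nlinarith [hfnonneg k s, div_nonneg (by positivity : (0:ℝ) ≤ (n:ℝ) + 1) (hlampos k).le]
  have hsumm : ∀ s, T ≤ s → Summable (fun k => f k s) := by
    intro s hs
    exact Summable.of_nonneg_of_le (fun k => hfnonneg k s) (hfle' s hs) hu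
  -- Part 1: strict anti
  have hSA : StrictAntiOn (muOff n t) (Set.Ici T) := by
    intro x hx y hy hxy
    rw [hmu, hmu]
    apply mul_lt_mul_of_pos_left _ (by norm_num : (0:ℝ) < 8)
    apply Summable.tsum_lt_tsum (i := 0)
    · intro k
      apply mul_le_mul_of_nonneg_right _ (hapos k).le
      apply (div_le_div_iff_of_pos_right (hlampos k)).2
      exact Real.exp_le_exp.2 (by nlinarith [hlampos k])
    · apply mul_lt_mul_of_pos_right _ (hapos 0)
      apply (div_lt_div_iff_of_pos_right (hlampos 0)).2
      exact Real.exp_lt_exp.2 (by nlinarith [hlampos 0])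
    · exact hsumm y (le_trans hx hxy.le)
    · exact hsumm x hx
  set C := ∑' k : ℕ, ((n : ℝ) + 1) / lam k with hC
  have hCnonneg : 0 ≤ C := tsum_nonneg (fun k => by
    have := (hlampos k).le; positivity)
  have hub : ∀ s, T ≤ s → muOff n t s ≤ 8 * C * Real.exp (-(lam 0) * (s - T)) := by
    intro s hs
    rw [hmu]
    have h1 : ∑' k, f k s ≤ ∑' k, Real.exp (-(lam 0) * (s - T)) * (((n : ℝ) + 1) / lam k) :=
      Summable.tsum_le_tsum (hfle s hs) (hsumm s hs) (hu.mul_left _)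
    rw [tsum_mul_left, ← hC] at h1
    nlinarith [Real.exp_pos (-(lam 0) * (s - T))]
  have hlb : ∀ s, 0 ≤ muOff n t s := by
    intro s
    rw [hmu]
    have : 0 ≤ ∑' k, f k s := tsum_nonneg (fun k => hfnonneg k s)
    positivity
  have htend : Filter.Tendsto (muOff n t) Filter.atTop (nhds 0) := by
    have hinner : Filter.Tendsto (fun s : ℝ => -(lam 0) * (s - T)) Filter.atTop Filter.atBot := by
      apply Filter.Tendsto.const_mul_atTop_of_neg (neg_lt_zero.2 (hlampos 0))
      exact Filter.tendsto_atTop_add_const_right _ _ Filter.tendsto_id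
    have hexp : Filter.Tendsto (fun s : ℝ => Real.exp (-(lam 0) * (s - T)))
        Filter.atTop (nhds 0) := Real.tendsto_exp_atBot.comp hinner
    have hg : Filter.Tendsto (fun s : ℝ => 8 * C * Real.exp (-(lam 0) * (s - T)))
        Filter.atTop (nhds 0) := by
      have := hexp.const_mul (8 * C)
      simpa using this
    apply squeeze_zero' (Filter.Eventually.of_forall hlb) _ hg
    filter_upwards [Filter.eventually_ge_atTop T] with s hs
    exact hub s hs
  have hcont : ContinuousOn (muOff n t) (Set.Ici T) := by
    have h1 : ContinuousOn (fun s => ∑' k, f k s) (Set.Ici T) := by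
      apply continuousOn_tsum (u := fun k => ((n : ℝ) + 1) / lam k)
      · intro k
        apply Continuous.continuousOn
        simp only [hf]
        fun_prop
      · exact hu
      · intro k s hs
        rw [Real.norm_eq_abs, abs_of_nonneg (hfnonneg k s)]
        exact hfle' s hs k
    have h2 : ContinuousOn (fun s => 8 * ∑' k, f k s) (Set.Ici T) :=
      continuousOn_const.mul h1
    exact h2
  refine ⟨hSA, htend, ?_⟩
  intro m hm hmlt
  obtain ⟨S, hS1, hS2⟩ : ∃ S, muOff n t S < m ∧ T ≤ S :=
    ((htend.eventually (gt_mem_nhds hm)).and (Filter.eventually_ge_atTop T)).exists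
  have hmem : m ∈ Set.Icc (muOff n t S) (muOff n t T) := ⟨hS1.le, hmlt.le⟩
  obtain ⟨s, hsmem, hseq⟩ :=
    intermediate_value_Icc' hS2 (hcont.mono (Set.Icc_subset_Ici_self)) hmem
  have hTs : T < s := by
    rcases lt_or_eq_of_le hsmem.1 with h | h
    · exact h
    · exfalso
      rw [← h] at hseq
      rw [hseq] at hmlt
      exact lt_irrefl m hmlt
  refine ⟨s, ⟨hTs, hseq⟩, ?_⟩
  rintro y ⟨hy1, hy2⟩
  exact hSA.injOn (Set.mem_Ici.2 hy1.le) (Set.mem_Ici.2 hTs.le) (by rw [hy2, hseq])
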